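/- arXiv:2303.09496 — 6 statements merged into one kernel-verified Lean document; each statement's English description precedes it below -/
import Mathlib

section
/- Let f be a polynomial in x₀,…,xₙ over K, let v ∈ K^{n+1} with v ≠ 0, and let φ ∈ M_{n+1}(K) with f(φ·v) = 0 and φ·v ≠ 0. If all partial derivatives (∂s_v/∂a_{ij}) vanish at φ (i.e., the point condition P_q is singular at φ), then all partial derivatives ∂f/∂x_i vanish at φ·v (i.e., X = V(f) is singular at the point φ(q)). -/
open MvPolynomial

/-- The polynomial `s_v` in the matrix variables `a_{ij}` obtained from `f`
by substituting `x_i ↦ ∑_j a_{ij} v_j`. -/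
noncomputable def pointConditionPoly {K : Type*} [CommRing K] {n : ℕ}
    (f : MvPolynomial (Fin (n + 1)) K) (v : Fin (n + 1) → K) :
    MvPolynomial (Fin (n + 1) × Fin (n + 1)) K :=
  aeval (fun i => ∑ j, C (v j) * X (i, j)) f

lemma pcp_eval {K : Type*} [CommRing K] {n : ℕ}
    (f : MvPolynomial (Fin (n + 1)) K) (v : Fin (n + 1) → K)
    (φ : Matrix (Fin (n + 1)) (Fin (n + 1)) K) :
    eval (fun p : Fin (n + 1) × Fin (n + 1) => φ p.1 p.2)
      (aeval (fun i => ∑ j, C (v j) * X (i, j)) f) = eval (φ.mulVec v) f := by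
  induction f using MvPolynomial.induction_on with
  | C a => simp
  | add p q hp hq => simp [← aeval_eq_bind₁, hp, hq]
  | mul_X p k hp =>
      simp only [← aeval_eq_bind₁, map_mul, aeval_X, eval_mul, hp]
      simp [Matrix.mulVec, dotProduct, mul_comm]

lemma pcp_pderiv {K : Type*} [CommRing K] {n : ℕ}
    (f : MvPolynomial (Fin (n + 1)) K) (v : Fin (n + 1) → K)
    (φ : Matrix (Fin (n + 1)) (Fin (n + 1)) K) (i j : Fin (n + 1)) :
    eval (fun p : Fin (n + 1) × Fin (n + 1) => φ p.1 p.2)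
      (pderiv (i, j) (aeval (fun i => ∑ j, C (v j) * X (i, j)) f))
      = v j * eval (φ.mulVec v) (pderiv i f) := by
  induction f using MvPolynomial.induction_on with
  | C a => simp
  | add p q hp hq => simp [← aeval_eq_bind₁, hp, hq, mul_add]
  | mul_X p k hp =>
      have hσ : pderiv (i, j) ((fun i => ∑ j, C (v j) * X (i, j)) k)
          = if k = i then C (v j) else 0 := by
        simp only [map_sum, pderiv_C_mul]
        by_cases h : k = i
        · subst h
          rw [Finset.sum_eq_single j]
          · simp
          · intro b _ hb
            rw [pderiv_X_of_ne, mul_zero]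
            simp [hb]
          · simp
        · rw [Finset.sum_eq_zero, if_neg h]
          intro b _
          rw [pderiv_X_of_ne, mul_zero]
          simp [h]
      simp only [← aeval_eq_bind₁, map_mul, aeval_X, pderiv_mul, map_add, eval_mul, hp, hσ]
      rw [pcp_eval]
      by_cases h : k = i
      · subst h
        simp only [if_pos rfl, pderiv_X_self, Matrix.mulVec, dotProduct]
        simp [Matrix.mulVec, dotProduct, mul_comm]
        ring
      · rw [if_neg h, pderiv_X_of_ne h]
        simp [Matrix.mulVec, dotProduct, mul_comm]
        ring

/-- If the point condition `P_q` is singular at `φ` and `q ∉ ℙker φ`, then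
`X = V(f)` is singular at `φ(q)`. -/
theorem pointCondition_singular_of {K : Type*} [Field K] [IsAlgClosed K]
    [CharZero K] {n : ℕ}
    (f : MvPolynomial (Fin (n + 1)) K) (v : Fin (n + 1) → K) (hv : v ≠ 0)
    (φ : Matrix (Fin (n + 1)) (Fin (n + 1)) K)
    (hf : eval (φ.mulVec v) f = 0)
    (hφv : φ.mulVec v ≠ 0)
    (hsing : ∀ i j, eval (fun p : Fin (n + 1) × Fin (n + 1) => φ p.1 p.2)
        (pderiv (i, j) (pointConditionPoly f v)) = 0) :
    ∀ i, eval (φ.mulVec v) (pderiv i f) = 0 := by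
  intro i
  obtain ⟨j, hj⟩ : ∃ j, v j ≠ 0 := by
    by_contra h
    push_neg at h
    exact hv (funext h)
  have := hsing i j
  rw [pointConditionPoly, pcp_pderiv] at this
  exact (mul_eq_zero.mp this).resolve_left hj
end

section
/- Let φ ∈ M₄(K) be nonzero. Then (φw)₀(φw)₃ = (φw)₁(φw)₂ for all w ∈ K⁴ (i.e., the image of φ lies in the cone over the quadric Q) if and only if there exists s ∈ K²\{0} such that φw ∈ A_s for all w ∈ K⁴, or there exists s ∈ K²\{0} such that φw ∈ B_s for all w ∈ K⁴. That is, the support of the base scheme of the rational map induced by Q is Z₁ ∪ Z₂. -/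
variable {K : Type*} [Field K]

/-- Membership in the a-line cone `A_s = {x : s₁x₀ = s₀x₂ ∧ s₁x₁ = s₀x₃}`. -/
def memA (s : Fin 2 → K) (x : Fin 4 → K) : Prop :=
  s 1 * x 0 = s 0 * x 2 ∧ s 1 * x 1 = s 0 * x 3

/-- Membership in the b-line cone `B_s = {x : s₁x₀ = s₀x₁ ∧ s₁x₂ = s₀x₃}`. -/
def memB (s : Fin 2 → K) (x : Fin 4 → K) : Prop :=
  s 1 * x 0 = s 0 * x 1 ∧ s 1 * x 2 = s 0 * x 3

private lemma quad_of_memA (s : Fin 2 → K) (x : Fin 4 → K) (hs : s ≠ 0) (h : memA s x) :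
    x 0 * x 3 = x 1 * x 2 := by
  obtain ⟨h1, h2⟩ := h
  obtain ⟨i, hi⟩ : ∃ i, s i ≠ 0 := by simpa [Function.ne_iff] using hs
  fin_cases i
  · exact mul_left_cancel₀ (show s 0 ≠ 0 from hi) (by linear_combination x 1 * h1 - x 0 * h2)
  · exact mul_left_cancel₀ (show s 1 ≠ 0 from hi) (by linear_combination x 3 * h1 - x 2 * h2)

private lemma quad_of_memB (s : Fin 2 → K) (x : Fin 4 → K) (hs : s ≠ 0) (h : memB s x) :
    x 0 * x 3 = x 1 * x 2 := by
  obtain ⟨h1, h2⟩ := h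
  obtain ⟨i, hi⟩ : ∃ i, s i ≠ 0 := by simpa [Function.ne_iff] using hs
  fin_cases i
  · exact mul_left_cancel₀ (show s 0 ≠ 0 from hi) (by linear_combination x 2 * h1 - x 0 * h2)
  · exact mul_left_cancel₀ (show s 1 ≠ 0 from hi) (by linear_combination x 3 * h1 - x 1 * h2)

private lemma exists_memA (u : Fin 4 → K) (hu : u ≠ 0) (hq : u 0 * u 3 = u 1 * u 2) :
    ∃ s : Fin 2 → K, s ≠ 0 ∧ memA s u := by
  by_cases h13 : u 1 = 0 ∧ u 3 = 0
  · refine ⟨![u 0, u 2], ?_, ?_, ?_⟩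
    · intro h0
      apply hu
      have e0 : u 0 = 0 := by simpa using congrFun h0 0
      have e2 : u 2 = 0 := by simpa using congrFun h0 1
      funext i; fin_cases i <;> simp [e0, e2, h13.1, h13.2]
    · show u 2 * u 0 = u 0 * u 2; ring
    · show u 2 * u 1 = u 0 * u 3; linear_combination -hq
  · refine ⟨![u 1, u 3], ?_, ?_, ?_⟩
    · intro h0
      apply h13
      constructor
      · simpa using congrFun h0 0
      · simpa using congrFun h0 1
    · show u 3 * u 0 = u 1 * u 2; linear_combination hq
    · show u 3 * u 1 = u 1 * u 3; ring

private lemma exists_memB (u : Fin 4 → K) (hu : u ≠ 0) (hq : u 0 * u 3 = u 1 * u 2) :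
    ∃ s : Fin 2 → K, s ≠ 0 ∧ memB s u := by
  by_cases h23 : u 2 = 0 ∧ u 3 = 0
  · refine ⟨![u 0, u 1], ?_, ?_, ?_⟩
    · intro h0
      apply hu
      have e0 : u 0 = 0 := by simpa using congrFun h0 0
      have e1 : u 1 = 0 := by simpa using congrFun h0 1
      funext i; fin_cases i <;> simp [e0, e1, h23.1, h23.2]
    · show u 1 * u 0 = u 0 * u 1; ring
    · show u 1 * u 2 = u 0 * u 3; linear_combination -hq
  · refine ⟨![u 2, u 3], ?_, ?_, ?_⟩
    · intro h0
      apply h23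
      constructor
      · simpa using congrFun h0 0
      · simpa using congrFun h0 1
    · show u 3 * u 0 = u 2 * u 1; linear_combination hq
    · show u 3 * u 2 = u 2 * u 3; ring

private lemma dichotomy (sa sb : Fin 2 → K) (u v : Fin 4 → K) (hu : u ≠ 0)
    (hA : memA sa u) (hB : memB sb u)
    (hqv : v 0 * v 3 = v 1 * v 2)
    (hb : u 0 * v 3 + u 3 * v 0 = u 1 * v 2 + u 2 * v 1) :
    memA sa v ∨ memB sb v := by
  obtain ⟨hA1, hA2⟩ := hA
  obtain ⟨hB1, hB2⟩ := hB
  have bt : sa 0 * sb 0 * v 3 + sa 1 * sb 1 * v 0 = sa 0 * sb 1 * v 2 + sa 1 * sb 0 * v 1 := by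
    obtain ⟨k, hk⟩ : ∃ i, u i ≠ 0 := by simpa [Function.ne_iff] using hu
    fin_cases k
    · apply mul_left_cancel₀ (show u 0 ≠ 0 from hk)
      linear_combination (sa 0 * sb 0) * hb + v 0 * (sa 1 * hB1 + sb 0 * hA2)
        - v 2 * (sa 0 * hB1) - v 1 * (sb 0 * hA1)
    · apply mul_left_cancel₀ (show u 1 ≠ 0 from hk)
      linear_combination (sa 0 * sb 1) * hb - v 3 * (sa 0 * hB1) + v 0 * (sb 1 * hA2)
        - v 1 * (sb 0 * hA2 - sa 0 * hB2)
    · apply mul_left_cancel₀ (show u 2 ≠ 0 from hk)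
      linear_combination (sa 1 * sb 0) * hb - v 3 * (sb 0 * hA1) + v 0 * (sa 1 * hB2)
        + v 2 * (sb 0 * hA2 - sa 0 * hB2)
    · apply mul_left_cancel₀ (show u 3 ≠ 0 from hk)
      linear_combination (sa 1 * sb 1) * hb - v 3 * (sa 1 * hB1 + sb 0 * hA2)
        + v 2 * (sb 1 * hA2) + v 1 * (sa 1 * hB2)
  have p00 : (sa 1 * v 0 - sa 0 * v 2) * (sb 1 * v 0 - sb 0 * v 1) = 0 := by
    linear_combination v 0 * bt - sa 0 * sb 0 * hqv
  have p01 : (sa 1 * v 0 - sa 0 * v 2) * (sb 1 * v 2 - sb 0 * v 3) = 0 := by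
    linear_combination v 2 * bt - sa 1 * sb 0 * hqv
  have p10 : (sa 1 * v 1 - sa 0 * v 3) * (sb 1 * v 0 - sb 0 * v 1) = 0 := by
    linear_combination v 1 * bt - sa 0 * sb 1 * hqv
  have p11 : (sa 1 * v 1 - sa 0 * v 3) * (sb 1 * v 2 - sb 0 * v 3) = 0 := by
    linear_combination v 3 * bt - sa 1 * sb 1 * hqv
  by_cases h1 : sa 1 * v 0 - sa 0 * v 2 = 0
  · by_cases h2 : sa 1 * v 1 - sa 0 * v 3 = 0
    · exact Or.inl ⟨sub_eq_zero.1 h1, sub_eq_zero.1 h2⟩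
    · refine Or.inr ⟨sub_eq_zero.1 ((mul_eq_zero.1 p10).resolve_left h2),
        sub_eq_zero.1 ((mul_eq_zero.1 p11).resolve_left h2)⟩
  · refine Or.inr ⟨sub_eq_zero.1 ((mul_eq_zero.1 p00).resolve_left h1),
      sub_eq_zero.1 ((mul_eq_zero.1 p01).resolve_left h1)⟩

private lemma memA_cancel (s : Fin 2 → K) (x y : Fin 4 → K)
    (h1 : memA s (x + y)) (h2 : memA s x) : memA s y := by
  obtain ⟨a1, a2⟩ := h1; obtain ⟨b1, b2⟩ := h2
  simp only [Pi.add_apply] at a1 a2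
  exact ⟨by linear_combination a1 - b1, by linear_combination a2 - b2⟩

private lemma memB_cancel (s : Fin 2 → K) (x y : Fin 4 → K)
    (h1 : memB s (x + y)) (h2 : memB s x) : memB s y := by
  obtain ⟨a1, a2⟩ := h1; obtain ⟨b1, b2⟩ := h2
  simp only [Pi.add_apply] at a1 a2
  exact ⟨by linear_combination a1 - b1, by linear_combination a2 - b2⟩

/-- The support of the base scheme of the rational map induced by the smooth
quadric `Q = V(x₀x₃ - x₁x₂)` is `Z₁ ∪ Z₂`. -/
theorem base_locus_eq_union [IsAlgClosed K] [CharZero K]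
    (φ : Matrix (Fin 4) (Fin 4) K) (hφ : φ ≠ 0) :
    (∀ w : Fin 4 → K, φ.mulVec w 0 * φ.mulVec w 3 = φ.mulVec w 1 * φ.mulVec w 2) ↔
      (∃ s : Fin 2 → K, s ≠ 0 ∧ ∀ w : Fin 4 → K, memA s (φ.mulVec w)) ∨
      (∃ s : Fin 2 → K, s ≠ 0 ∧ ∀ w : Fin 4 → K, memB s (φ.mulVec w)) := by
  constructor
  · intro h
    obtain ⟨i0, p, hip⟩ : ∃ i j, φ i j ≠ 0 := by
      by_contra hc
      push_neg at hc
      exact hφ (by ext i j; simpa using hc i j)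
    set wp : Fin 4 → K := Pi.single p 1 with hwp
    have hup : ∀ i, φ.mulVec wp i = φ i p := by
      intro i
      simp [wp, Matrix.mulVec, dotProduct, Pi.single_apply]
    have hu : φ.mulVec wp ≠ 0 := by
      intro h0
      exact hip (by rw [← hup i0, h0]; rfl)
    have hqu := h wp
    obtain ⟨sa, hsa, hAu⟩ := exists_memA (φ.mulVec wp) hu hqu
    obtain ⟨sb, hsb, hBu⟩ := exists_memB (φ.mulVec wp) hu hqu
    have hd : ∀ w, memA sa (φ.mulVec w) ∨ memB sb (φ.mulVec w) := by
      intro w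
      refine dichotomy sa sb (φ.mulVec wp) (φ.mulVec w) hu hAu hBu (h w) ?_
      have h3 := h (wp + w)
      rw [Matrix.mulVec_add] at h3
      simp only [Pi.add_apply] at h3
      linear_combination h3 - hqu - h w
    by_cases hAall : ∀ w, memA sa (φ.mulVec w)
    · exact Or.inl ⟨sa, hsa, hAall⟩
    · push_neg at hAall
      obtain ⟨w0, hw0⟩ := hAall
      have hB0 : memB sb (φ.mulVec w0) := (hd w0).resolve_left hw0
      refine Or.inr ⟨sb, hsb, fun w => ?_⟩
      rcases hd w with hA | hB
      · rcases hd (w + w0) with hA' | hB'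
        · rw [Matrix.mulVec_add] at hA'
          exact absurd (memA_cancel sa _ _ hA' hA) hw0
        · rw [Matrix.mulVec_add, add_comm] at hB'
          exact memB_cancel sb _ _ hB' hB0
      · exact hB
  · rintro (⟨s, hs, hA⟩ | ⟨s, hs, hB⟩) w
    · exact quad_of_memA s _ hs (hA w)
    · exact quad_of_memB s _ hs (hB w)
end

section
/- Let φ ∈ M₄(K) be nonzero. Then there exists s ∈ K²\{0} with φw ∈ A_s for all w ∈ K⁴ if and only if there exist s ∈ K²\{0} and t ∈ M_{2×4}(K)\{0} with φ = σ₁(s,t); analogously, there exists s ∈ K²\{0} with φw ∈ B_s for all w ∈ K⁴ if and only if φ = σ₂(s,t) for some such s and t. That is, Z₁ and Z₂ are the images of the Segre embeddings σ₁ and σ₂ of ℙ¹×ℙ⁷. -/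
variable {K : Type*} [Field K]

/-- The Segre embedding `σ₁`: rows `(s₀t⁰, s₀t¹, s₁t⁰, s₁t¹)`. -/
def segre1 (s : Fin 2 → K) (t : Matrix (Fin 2) (Fin 4) K) :
    Matrix (Fin 4) (Fin 4) K :=
  Matrix.of fun i j => s (![0, 0, 1, 1] i) * t (![0, 1, 0, 1] i) j

/-- The Segre embedding `σ₂`: rows `(s₀t⁰, s₁t⁰, s₀t¹, s₁t¹)`. -/
def segre2 (s : Fin 2 → K) (t : Matrix (Fin 2) (Fin 4) K) :
    Matrix (Fin 4) (Fin 4) K :=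
  Matrix.of fun i j => s (![0, 1, 0, 1] i) * t (![0, 0, 1, 1] i) j

lemma s1_ne_of_s0_eq (s : Fin 2 → K) (hs : s ≠ 0) (h0 : s 0 = 0) : s 1 ≠ 0 := by
  intro h1
  apply hs
  funext i
  fin_cases i <;> simpa

/-- `Z₁` and `Z₂` are the images of the Segre embeddings `σ₁` and `σ₂`. -/
theorem components_eq_segre_images [IsAlgClosed K] [CharZero K]
    (φ : Matrix (Fin 4) (Fin 4) K) (hφ : φ ≠ 0) :
    ((∃ s : Fin 2 → K, s ≠ 0 ∧ ∀ w : Fin 4 → K, memA s (φ.mulVec w)) ↔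
      (∃ (s : Fin 2 → K) (t : Matrix (Fin 2) (Fin 4) K),
        s ≠ 0 ∧ t ≠ 0 ∧ φ = segre1 s t)) ∧
    ((∃ s : Fin 2 → K, s ≠ 0 ∧ ∀ w : Fin 4 → K, memB s (φ.mulVec w)) ↔
      (∃ (s : Fin 2 → K) (t : Matrix (Fin 2) (Fin 4) K),
        s ≠ 0 ∧ t ≠ 0 ∧ φ = segre2 s t)) := by
  constructor
  · constructor
    · rintro ⟨s, hs, h⟩
      have key : ∀ j, s 1 * φ 0 j = s 0 * φ 2 j ∧ s 1 * φ 1 j = s 0 * φ 3 j := by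
        intro j
        have := h (Pi.single j 1)
        simpa [memA, Matrix.mulVec_single] using this
      by_cases h0 : s 0 = 0
      · have h1 := s1_ne_of_s0_eq s hs h0
        have z0 : ∀ j, φ 0 j = 0 := fun j => by
          have := (key j).1; rw [h0] at this; simpa [h1] using this
        have z1 : ∀ j, φ 1 j = 0 := fun j => by
          have := (key j).2; rw [h0] at this; simpa [h1] using this
        set t : Matrix (Fin 2) (Fin 4) K :=
          Matrix.of ![fun j => φ 2 j / s 1, fun j => φ 3 j / s 1] with ht
        have heq : φ = segre1 s t := by
          ext i j
          fin_cases i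
          · simp [segre1, ht, h0, z0 j]
          · simp [segre1, ht, h0, z1 j]
          · simp [segre1, ht]; field_simp
          · simp [segre1, ht]; field_simp
        refine ⟨s, t, hs, fun ht0 => hφ ?_, heq⟩
        rw [heq, ht0]; ext i j; simp [segre1]
      · set t : Matrix (Fin 2) (Fin 4) K :=
          Matrix.of ![fun j => φ 0 j / s 0, fun j => φ 1 j / s 0] with ht
        have heq : φ = segre1 s t := by
          ext i j
          fin_cases i
          · simp [segre1, ht]; field_simp
          · simp [segre1, ht]; field_simp
          · simp [segre1, ht]; field_simp; linear_combination -(key j).1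
          · simp [segre1, ht]; field_simp; linear_combination -(key j).2
        refine ⟨s, t, hs, fun ht0 => hφ ?_, heq⟩
        rw [heq, ht0]; ext i j; simp [segre1]
    · rintro ⟨s, t, hs, ht, rfl⟩
      refine ⟨s, hs, fun w => ?_⟩
      constructor <;>
        · simp [memA, segre1, Matrix.mulVec, dotProduct, Fin.sum_univ_four]
          ring
  · constructor
    · rintro ⟨s, hs, h⟩
      have key : ∀ j, s 1 * φ 0 j = s 0 * φ 1 j ∧ s 1 * φ 2 j = s 0 * φ 3 j := by
        intro j
        have := h (Pi.single j 1)
        simpa [memB, Matrix.mulVec_single] using this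
      by_cases h0 : s 0 = 0
      · have h1 := s1_ne_of_s0_eq s hs h0
        have z0 : ∀ j, φ 0 j = 0 := fun j => by
          have := (key j).1; rw [h0] at this; simpa [h1] using this
        have z2 : ∀ j, φ 2 j = 0 := fun j => by
          have := (key j).2; rw [h0] at this; simpa [h1] using this
        set t : Matrix (Fin 2) (Fin 4) K :=
          Matrix.of ![fun j => φ 1 j / s 1, fun j => φ 3 j / s 1] with ht
        have heq : φ = segre2 s t := by
          ext i j
          fin_cases i
          · simp [segre2, ht, h0, z0 j]
          · simp [segre2, ht]; field_simp
          · simp [segre2, ht, h0, z2 j]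
          · simp [segre2, ht]; field_simp
        refine ⟨s, t, hs, fun ht0 => hφ ?_, heq⟩
        rw [heq, ht0]; ext i j; simp [segre2]
      · set t : Matrix (Fin 2) (Fin 4) K :=
          Matrix.of ![fun j => φ 0 j / s 0, fun j => φ 2 j / s 0] with ht
        have heq : φ = segre2 s t := by
          ext i j
          fin_cases i
          · simp [segre2, ht]; field_simp
          · simp [segre2, ht]; field_simp; linear_combination -(key j).1
          · simp [segre2, ht]; field_simp
          · simp [segre2, ht]; field_simp; linear_combination -(key j).2
        refine ⟨s, t, hs, fun ht0 => hφ ?_, heq⟩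
        rw [heq, ht0]; ext i j; simp [segre2]
    · rintro ⟨s, t, hs, ht, rfl⟩
      refine ⟨s, hs, fun w => ?_⟩
      constructor <;>
        · simp [memB, segre2, Matrix.mulVec, dotProduct, Fin.sum_univ_four]
          ring
end

section
/- Let p, q ∈ K²\{0} and k ∈ K⁴\{0}, and let φ = ρ(σ(p,q), k) ∈ Z₁ ∩ Z₂. Then the subspace T₁ = {σ₁(p,t) + σ₁(s, ρ'(q,k)) : t ∈ M_{2×4}(K), s ∈ K²} of M₄(K) — the (affine cone over the) embedded tangent space to Z₁ at φ — has dimension 9 and equals the linear span of the union of the two sets {ψ ∈ M₄(K) : ψw ∈ A_p for all w} and {ψ ∈ M₄(K) : ψx = 0 whenever Σᵢ kᵢxᵢ = 0, and there exists r ∈ K² with ψw ∈ K·σ(r,q) for all w}. The analogous statement holds for Z₂ with the roles of the rulings exchanged. -/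
variable {K : Type*} [Field K]

/-- The Segre map `σ : ℙ¹ × ℙ¹ → ℙ³`, `σ(p,q) = (p₀q₀, p₀q₁, p₁q₀, p₁q₁)`. -/
def segreV (p q : Fin 2 → K) : Fin 4 → K :=
  ![p 0 * q 0, p 0 * q 1, p 1 * q 0, p 1 * q 1]

/-- The rank-one matrix `ρ(u,k)ᵢⱼ = uᵢkⱼ`. -/
def rho (u k : Fin 4 → K) : Matrix (Fin 4) (Fin 4) K :=
  Matrix.of fun i j => u i * k j

/-- The rank-one `2×4` matrix `ρ'(p,k)ᵢⱼ = pᵢkⱼ`. -/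
def rho' (p : Fin 2 → K) (k : Fin 4 → K) : Matrix (Fin 2) (Fin 4) K :=
  Matrix.of fun i j => p i * k j

namespace TZaux

def L (p q : Fin 2 → K) (k : Fin 4 → K) :
    (Matrix (Fin 2) (Fin 4) K × (Fin 2 → K)) →ₗ[K] Matrix (Fin 4) (Fin 4) K where
  toFun ts := segre1 p ts.1 + segre1 ts.2 (rho' q k)
  map_add' x y := by
    funext i j
    simp only [segre1, rho', Matrix.of_apply, Matrix.add_apply, Pi.add_apply,
      Prod.fst_add, Prod.snd_add]
    ring
  map_smul' c x := by
    funext i j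
    simp only [segre1, rho', Matrix.of_apply, Matrix.smul_apply, Pi.smul_apply,
      Prod.smul_fst, Prod.smul_snd, smul_eq_mul, RingHom.id_apply, Matrix.add_apply]
    ring

lemma ne2 {p : Fin 2 → K} (hp : p ≠ 0) : p 0 ≠ 0 ∨ p 1 ≠ 0 := by
  by_contra h
  push_neg at h
  exact hp (funext fun i => by fin_cases i <;> simp [h.1, h.2])

lemma ne4 {k : Fin 4 → K} (hk : k ≠ 0) : ∃ j, k j ≠ 0 := by
  by_contra h
  push_neg at h
  exact hk (funext fun j => by simp [h j])

lemma L_apply (p q : Fin 2 → K) (k : Fin 4 → K) (t : Matrix (Fin 2) (Fin 4) K)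
    (s : Fin 2 → K) : L p q k (t, s) = segre1 p t + segre1 s (rho' q k) := rfl

lemma Lv0 (p q : Fin 2 → K) (k : Fin 4 → K) : L p q k (-(rho' q k), p) = 0 := by
  rw [L_apply]
  funext i j
  simp only [segre1, rho', Matrix.of_apply, Matrix.add_apply, Matrix.neg_apply,
    Matrix.zero_apply]
  ring

lemma ker_L (p q : Fin 2 → K) (k : Fin 4 → K) (hp : p ≠ 0) (hq : q ≠ 0) (hk : k ≠ 0) :
    LinearMap.ker (L p q k) = Submodule.span K {((-(rho' q k), p) :
      Matrix (Fin 2) (Fin 4) K × (Fin 2 → K))} := by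
  ext x
  obtain ⟨t, s⟩ := x
  simp only [LinearMap.mem_ker, Submodule.mem_span_singleton]
  constructor
  · intro h
    have H0 : ∀ j, p 0 * t 0 j + s 0 * (q 0 * k j) = 0 := fun j => by
      simpa [L_apply, segre1, rho'] using congrFun (congrFun h 0) j
    have H1 : ∀ j, p 0 * t 1 j + s 0 * (q 1 * k j) = 0 := fun j => by
      simpa [L_apply, segre1, rho'] using congrFun (congrFun h 1) j
    have H2 : ∀ j, p 1 * t 0 j + s 1 * (q 0 * k j) = 0 := fun j => by
      simpa [L_apply, segre1, rho'] using congrFun (congrFun h 2) j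
    have H3 : ∀ j, p 1 * t 1 j + s 1 * (q 1 * k j) = 0 := fun j => by
      simpa [L_apply, segre1, rho'] using congrFun (congrFun h 3) j
    have key : ∀ (b : Fin 2) (j : Fin 4), (s 0 * p 1 - s 1 * p 0) * (q b * k j) = 0 := by
      intro b j
      fin_cases b <;> simp only [Fin.zero_eta, Fin.mk_one, Fin.isValue]
      · linear_combination p 1 * H0 j - p 0 * H2 j
      · linear_combination p 1 * H1 j - p 0 * H3 j
    obtain ⟨j0, hj0⟩ := ne4 hk
    have hs : s 0 * p 1 - s 1 * p 0 = 0 := by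
      rcases ne2 hq with hq' | hq'
      · rcases mul_eq_zero.mp (key 0 j0) with h' | h'
        · exact h'
        · exact absurd h' (mul_ne_zero hq' hj0)
      · rcases mul_eq_zero.mp (key 1 j0) with h' | h'
        · exact h'
        · exact absurd h' (mul_ne_zero hq' hj0)
    by_cases hp0 : p 0 = 0
    · have hp1 : p 1 ≠ 0 := by rcases ne2 hp with h' | h' <;> [exact absurd hp0 h'; exact h']
      have hs0 : s 0 = 0 := by
        have : s 0 * p 1 = 0 := by linear_combination hs + s 1 * hp0
        exact (mul_eq_zero.mp this).resolve_right hp1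
      refine ⟨s 1 / p 1, Prod.ext ?_ ?_⟩
      · show (s 1 / p 1) • (-(rho' q k)) = t
        funext b j
        simp only [Matrix.smul_apply, Matrix.neg_apply, rho', Matrix.of_apply, smul_eq_mul]
        fin_cases b <;> simp only [Fin.zero_eta, Fin.mk_one, Fin.isValue]
        · field_simp
          linear_combination -H2 j
        · field_simp
          linear_combination -H3 j
      · show (s 1 / p 1) • p = s
        funext b
        fin_cases b <;>
          simp only [Fin.zero_eta, Fin.mk_one, Fin.isValue, Pi.smul_apply, smul_eq_mul]
        · rw [hp0, hs0]; ring
        · field_simp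
    · refine ⟨s 0 / p 0, Prod.ext ?_ ?_⟩
      · show (s 0 / p 0) • (-(rho' q k)) = t
        funext b j
        simp only [Matrix.smul_apply, Matrix.neg_apply, rho', Matrix.of_apply, smul_eq_mul]
        fin_cases b <;> simp only [Fin.zero_eta, Fin.mk_one, Fin.isValue]
        · field_simp
          linear_combination -H0 j
        · field_simp
          linear_combination -H1 j
      · show (s 0 / p 0) • p = s
        funext b
        fin_cases b <;>
          simp only [Fin.zero_eta, Fin.mk_one, Fin.isValue, Pi.smul_apply, smul_eq_mul]
        · field_simp
        · field_simp
          linear_combination hs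
  · rintro ⟨c, hc⟩
    rw [← hc, map_smul, Lv0, smul_zero]


lemma v0_ne (p q : Fin 2 → K) (k : Fin 4 → K) (hp : p ≠ 0) :
    ((-(rho' q k), p) : Matrix (Fin 2) (Fin 4) K × (Fin 2 → K)) ≠ 0 := by
  intro h
  exact hp (congrArg Prod.snd h)

lemma rank_L (p q : Fin 2 → K) (k : Fin 4 → K) (hp : p ≠ 0) (hq : q ≠ 0) (hk : k ≠ 0) :
    Module.finrank K ↥(LinearMap.range (L p q k)) = 9 := by
  have h1 := LinearMap.finrank_range_add_finrank_ker (L p q k)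
  rw [ker_L p q k hp hq hk, finrank_span_singleton (v0_ne p q k hp)] at h1
  have h2 : Module.finrank K (Matrix (Fin 2) (Fin 4) K × (Fin 2 → K)) = 10 := by
    simp [Module.finrank_prod, Module.finrank_matrix]
  rw [h2] at h1
  omega

lemma hsub1 (p q : Fin 2 → K) (k : Fin 4 → K) (hp : p ≠ 0) :
    {ψ : Matrix (Fin 4) (Fin 4) K | ∀ w : Fin 4 → K, memA p (ψ.mulVec w)} ⊆
      ↑(LinearMap.range (L p q k)) := by
  intro ψ hψ
  have hcol : ∀ j : Fin 4, p 1 * ψ 0 j = p 0 * ψ 2 j ∧ p 1 * ψ 1 j = p 0 * ψ 3 j := by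
    intro j
    have := hψ (Pi.single j 1)
    simpa [memA, Matrix.mulVec_single] using this
  by_cases hp0 : p 0 = 0
  · have hp1 : p 1 ≠ 0 := by rcases ne2 hp with h' | h' <;> [exact absurd hp0 h'; exact h']
    have hz : ∀ j, ψ 0 j = 0 ∧ ψ 1 j = 0 := by
      intro j
      constructor
      · have h' := (hcol j).1; rw [hp0, zero_mul] at h'
        exact (mul_eq_zero.mp h').resolve_left hp1
      · have h' := (hcol j).2; rw [hp0, zero_mul] at h'
        exact (mul_eq_zero.mp h').resolve_left hp1
    refine ⟨(Matrix.of fun b j => ψ (![2, 3] b) j / p 1, 0), ?_⟩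
    rw [L_apply]
    funext i j
    fin_cases i <;>
      simp [segre1, rho', hp0, (hz j).1, (hz j).2] <;> field_simp
  · refine ⟨(Matrix.of fun b j => ψ (![0, 1] b) j / p 0, 0), ?_⟩
    rw [L_apply]
    funext i j
    fin_cases i <;> simp [segre1, rho'] <;> field_simp
    · linear_combination (hcol j).1
    · linear_combination (hcol j).2

lemma dot_single (v : Fin 4 → K) (j : Fin 4) (a : K) :
    ∑ l, v l * (Pi.single j a : Fin 4 → K) l = v j * a := by
  simp [Pi.single_apply, mul_ite]

lemma hsub2 (p q : Fin 2 → K) (k : Fin 4 → K) (hk : k ≠ 0) :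
    {ψ : Matrix (Fin 4) (Fin 4) K |
        (∀ x : Fin 4 → K, ∑ i, k i * x i = 0 → ψ.mulVec x = 0) ∧
        ∃ r : Fin 2 → K, ∀ w : Fin 4 → K, ∃ c : K, ψ.mulVec w = c • segreV r q} ⊆
      ↑(LinearMap.range (L p q k)) := by
  rintro ψ ⟨hkill, r, hr⟩
  obtain ⟨j0, hj0⟩ := ne4 hk
  set w0 : Fin 4 → K := Pi.single j0 (k j0)⁻¹ with hw0
  obtain ⟨c, hc⟩ := hr w0
  have hent : ∀ (i j : Fin 4), ψ i j = k j * (c * segreV r q i) := by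
    intro i j
    have hx : ∑ l, k l * ((Pi.single j (1 : K) : Fin 4 → K) - k j • w0) l = 0 := by
      have e1 : ∀ l, k l * ((Pi.single j (1 : K) : Fin 4 → K) - k j • w0) l
          = k l * (Pi.single j (1 : K) : Fin 4 → K) l - k j * (k l * w0 l) := by
        intro l
        simp only [Pi.sub_apply, Pi.smul_apply, smul_eq_mul]
        ring
      rw [Finset.sum_congr rfl fun l _ => e1 l, Finset.sum_sub_distrib, ← Finset.mul_sum,
        dot_single, dot_single, mul_one, mul_inv_cancel₀ hj0]
      ring
    have h0 := hkill _ hx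
    rw [Matrix.mulVec_sub, Matrix.mulVec_smul, sub_eq_zero, hc] at h0
    have h1 := congrFun h0 i
    simpa [Matrix.mulVec_single] using h1
  refine ⟨(0, c • r), ?_⟩
  rw [L_apply]
  funext i j
  rw [hent i j]
  simp only [segre1, rho', Matrix.of_apply, Matrix.add_apply, Matrix.zero_apply, mul_zero,
    zero_mul, zero_add, Pi.smul_apply, smul_eq_mul]
  fin_cases i <;> simp [segreV] <;> ring

lemma hsup (p q : Fin 2 → K) (k : Fin 4 → K) :
    (↑(LinearMap.range (L p q k)) : Set (Matrix (Fin 4) (Fin 4) K)) ⊆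
      ↑(Submodule.span K
        ({ψ : Matrix (Fin 4) (Fin 4) K | ∀ w : Fin 4 → K, memA p (ψ.mulVec w)} ∪
         {ψ : Matrix (Fin 4) (Fin 4) K |
           (∀ x : Fin 4 → K, ∑ i, k i * x i = 0 → ψ.mulVec x = 0) ∧
           ∃ r : Fin 2 → K, ∀ w : Fin 4 → K, ∃ c : K,
             ψ.mulVec w = c • segreV r q})) := by
  rintro χ ⟨⟨t, s⟩, rfl⟩
  rw [L_apply]
  have m1 : segre1 p t ∈
      {ψ : Matrix (Fin 4) (Fin 4) K | ∀ w : Fin 4 → K, memA p (ψ.mulVec w)} := by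
    intro w
    constructor <;>
      simp [segre1, Matrix.mulVec, dotProduct, Fin.sum_univ_four] <;> ring
  have m2 : segre1 s (rho' q k) ∈
      {ψ : Matrix (Fin 4) (Fin 4) K |
        (∀ x : Fin 4 → K, ∑ i, k i * x i = 0 → ψ.mulVec x = 0) ∧
        ∃ r : Fin 2 → K, ∀ w : Fin 4 → K, ∃ c : K, ψ.mulVec w = c • segreV r q} := by
    constructor
    · intro x hx
      rw [Fin.sum_univ_four] at hx
      funext i
      fin_cases i <;>
        simp [segre1, rho', Matrix.mulVec, dotProduct, Fin.sum_univ_four]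
      · linear_combination (s 0 * q 0) * hx
      · linear_combination (s 0 * q 1) * hx
      · linear_combination (s 1 * q 0) * hx
      · linear_combination (s 1 * q 1) * hx
    · refine ⟨s, fun w => ⟨∑ j, k j * w j, ?_⟩⟩
      funext i
      fin_cases i <;>
        simp [segre1, rho', segreV, Matrix.mulVec, dotProduct, Fin.sum_univ_four] <;>
        ring
  exact Submodule.add_mem _ (Submodule.subset_span (Or.inl m1))
    (Submodule.subset_span (Or.inr m2))


lemma Tset_eq (p q : Fin 2 → K) (k : Fin 4 → K) :
    {χ : Matrix (Fin 4) (Fin 4) K |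
        ∃ (t : Matrix (Fin 2) (Fin 4) K) (s : Fin 2 → K),
          χ = segre1 p t + segre1 s (rho' q k)}
      = ↑(LinearMap.range (L p q k)) := by
  ext χ
  simp only [Set.mem_setOf_eq, SetLike.mem_coe, LinearMap.mem_range]
  constructor
  · rintro ⟨t, s, rfl⟩
    exact ⟨(t, s), rfl⟩
  · rintro ⟨⟨t, s⟩, rfl⟩
    exact ⟨t, s, rfl⟩

lemma mainA (p q : Fin 2 → K) (k : Fin 4 → K) (hp : p ≠ 0) (hq : q ≠ 0) (hk : k ≠ 0) :
    Module.finrank K ↥(Submodule.span K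
        {χ : Matrix (Fin 4) (Fin 4) K |
          ∃ (t : Matrix (Fin 2) (Fin 4) K) (s : Fin 2 → K),
            χ = segre1 p t + segre1 s (rho' q k)}) = 9 ∧
      {χ : Matrix (Fin 4) (Fin 4) K |
          ∃ (t : Matrix (Fin 2) (Fin 4) K) (s : Fin 2 → K),
            χ = segre1 p t + segre1 s (rho' q k)}
        = ↑(Submodule.span K
            ({ψ : Matrix (Fin 4) (Fin 4) K | ∀ w : Fin 4 → K, memA p (ψ.mulVec w)} ∪
             {ψ : Matrix (Fin 4) (Fin 4) K |
               (∀ x : Fin 4 → K, ∑ i, k i * x i = 0 → ψ.mulVec x = 0) ∧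
               ∃ r : Fin 2 → K, ∀ w : Fin 4 → K, ∃ c : K,
                 ψ.mulVec w = c • segreV r q})) := by
  have hspan : Submodule.span K
      ({ψ : Matrix (Fin 4) (Fin 4) K | ∀ w : Fin 4 → K, memA p (ψ.mulVec w)} ∪
       {ψ : Matrix (Fin 4) (Fin 4) K |
         (∀ x : Fin 4 → K, ∑ i, k i * x i = 0 → ψ.mulVec x = 0) ∧
         ∃ r : Fin 2 → K, ∀ w : Fin 4 → K, ∃ c : K,
           ψ.mulVec w = c • segreV r q}) = LinearMap.range (L p q k) := by
    apply le_antisymm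
    · exact Submodule.span_le.mpr (Set.union_subset (hsub1 p q k hp) (hsub2 p q k hk))
    · intro χ hχ
      exact hsup p q k hχ
  constructor
  · rw [Tset_eq, Submodule.span_eq]
    exact rank_L p q k hp hq hk
  · rw [Tset_eq, ← hspan]


def E : Matrix (Fin 4) (Fin 4) K ≃ₗ[K] Matrix (Fin 4) (Fin 4) K :=
  Matrix.reindexLinearEquiv K K (Equiv.swap 1 2) (Equiv.refl (Fin 4))

lemma E_apply (M : Matrix (Fin 4) (Fin 4) K) (i j : Fin 4) :
    E M i j = M (Equiv.swap 1 2 i) j := by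
  simp [E, Matrix.reindexLinearEquiv_apply, Matrix.reindex_apply, Matrix.submatrix_apply]

lemma EE (M : Matrix (Fin 4) (Fin 4) K) : E (E M) = M := by
  funext i j
  rw [E_apply, E_apply, Equiv.swap_apply_self]

lemma E_segre (s : Fin 2 → K) (t : Matrix (Fin 2) (Fin 4) K) :
    E (segre1 s t) = segre2 s t := by
  funext i j
  rw [E_apply]
  fin_cases i <;> simp [segre1, segre2, Equiv.swap_apply_def]

lemma E_segre2 (s : Fin 2 → K) (t : Matrix (Fin 2) (Fin 4) K) :
    E (segre2 s t) = segre1 s t := by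
  rw [← E_segre, EE]

lemma E_mulVec (M : Matrix (Fin 4) (Fin 4) K) (w : Fin 4 → K) (i : Fin 4) :
    (E M).mulVec w i = M.mulVec w (Equiv.swap 1 2 i) := by
  simp [Matrix.mulVec, dotProduct, E_apply]

lemma segreV_swap (r p : Fin 2 → K) (i : Fin 4) :
    segreV r p (Equiv.swap 1 2 i) = segreV p r i := by
  fin_cases i <;> simp [segreV, Equiv.swap_apply_def] <;> ring

lemma mem_image_E {S : Set (Matrix (Fin 4) (Fin 4) K)} {ψ : Matrix (Fin 4) (Fin 4) K} :
    ψ ∈ (⇑E '' S) ↔ E ψ ∈ S := by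
  constructor
  · rintro ⟨φ, hφ, rfl⟩
    rwa [EE]
  · intro h
    exact ⟨E ψ, h, EE ψ⟩


lemma mainB (p q : Fin 2 → K) (k : Fin 4 → K) (hp : p ≠ 0) (hq : q ≠ 0) (hk : k ≠ 0) :
    Module.finrank K ↥(Submodule.span K
        {χ : Matrix (Fin 4) (Fin 4) K |
          ∃ (t : Matrix (Fin 2) (Fin 4) K) (s : Fin 2 → K),
            χ = segre2 q t + segre2 s (rho' p k)}) = 9 ∧
      {χ : Matrix (Fin 4) (Fin 4) K |
          ∃ (t : Matrix (Fin 2) (Fin 4) K) (s : Fin 2 → K),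
            χ = segre2 q t + segre2 s (rho' p k)}
        = ↑(Submodule.span K
            ({ψ : Matrix (Fin 4) (Fin 4) K | ∀ w : Fin 4 → K, memB q (ψ.mulVec w)} ∪
             {ψ : Matrix (Fin 4) (Fin 4) K |
               (∀ x : Fin 4 → K, ∑ i, k i * x i = 0 → ψ.mulVec x = 0) ∧
               ∃ r : Fin 2 → K, ∀ w : Fin 4 → K, ∃ c : K,
                 ψ.mulVec w = c • segreV p r})) := by
  obtain ⟨hr1, he1⟩ := mainA q p k hq hp hk
  have hTE : {χ : Matrix (Fin 4) (Fin 4) K |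
        ∃ (t : Matrix (Fin 2) (Fin 4) K) (s : Fin 2 → K),
          χ = segre2 q t + segre2 s (rho' p k)}
      = ⇑E '' {χ : Matrix (Fin 4) (Fin 4) K |
        ∃ (t : Matrix (Fin 2) (Fin 4) K) (s : Fin 2 → K),
          χ = segre1 q t + segre1 s (rho' p k)} := by
    ext χ
    simp only [Set.mem_setOf_eq, Set.mem_image]
    constructor
    · rintro ⟨t, s, rfl⟩
      exact ⟨segre1 q t + segre1 s (rho' p k), ⟨t, s, rfl⟩, by rw [map_add, E_segre, E_segre]⟩
    · rintro ⟨φ, ⟨t, s, rfl⟩, rfl⟩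
      exact ⟨t, s, by rw [map_add, E_segre, E_segre]⟩
  have h0 : Equiv.swap (1 : Fin 4) 2 0 = 0 := by decide
  have h1 : Equiv.swap (1 : Fin 4) 2 1 = 2 := by decide
  have h2 : Equiv.swap (1 : Fin 4) 2 2 = 1 := by decide
  have h3 : Equiv.swap (1 : Fin 4) 2 3 = 3 := by decide
  have hS1 : ⇑E '' {ψ : Matrix (Fin 4) (Fin 4) K | ∀ w : Fin 4 → K, memA q (ψ.mulVec w)}
      = {ψ : Matrix (Fin 4) (Fin 4) K | ∀ w : Fin 4 → K, memB q (ψ.mulVec w)} := by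
    ext ψ
    rw [mem_image_E]
    simp only [Set.mem_setOf_eq, memA, memB, E_mulVec, h0, h1, h2, h3]
  have hS2 : ⇑E '' {ψ : Matrix (Fin 4) (Fin 4) K |
        (∀ x : Fin 4 → K, ∑ i, k i * x i = 0 → ψ.mulVec x = 0) ∧
        ∃ r : Fin 2 → K, ∀ w : Fin 4 → K, ∃ c : K, ψ.mulVec w = c • segreV r p}
      = {ψ : Matrix (Fin 4) (Fin 4) K |
        (∀ x : Fin 4 → K, ∑ i, k i * x i = 0 → ψ.mulVec x = 0) ∧
        ∃ r : Fin 2 → K, ∀ w : Fin 4 → K, ∃ c : K, ψ.mulVec w = c • segreV p r} := by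
    ext ψ
    rw [mem_image_E]
    simp only [Set.mem_setOf_eq]
    have hkillE : (∀ x : Fin 4 → K, ∑ i, k i * x i = 0 → (E ψ).mulVec x = 0) ↔
        (∀ x : Fin 4 → K, ∑ i, k i * x i = 0 → ψ.mulVec x = 0) := by
      constructor
      · intro h x hx
        funext i
        simp only [Pi.zero_apply]
        have := congrFun (h x hx) (Equiv.swap 1 2 i)
        rwa [E_mulVec, Equiv.swap_apply_self, Pi.zero_apply] at this
      · intro h x hx
        funext i
        simp only [Pi.zero_apply]
        rw [E_mulVec]
        have := congrFun (h x hx) (Equiv.swap 1 2 i)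
        rwa [Pi.zero_apply] at this
    have hpt : (∃ r : Fin 2 → K, ∀ w : Fin 4 → K, ∃ c : K,
          (E ψ).mulVec w = c • segreV r p) ↔
        (∃ r : Fin 2 → K, ∀ w : Fin 4 → K, ∃ c : K, ψ.mulVec w = c • segreV p r) := by
      constructor
      · rintro ⟨r, h⟩
        refine ⟨r, fun w => ?_⟩
        obtain ⟨c, hc⟩ := h w
        refine ⟨c, funext fun i => ?_⟩
        have := congrFun hc (Equiv.swap 1 2 i)
        rw [E_mulVec, Equiv.swap_apply_self] at this
        rw [this]
        simp only [Pi.smul_apply, smul_eq_mul, segreV_swap]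
      · rintro ⟨r, h⟩
        refine ⟨r, fun w => ?_⟩
        obtain ⟨c, hc⟩ := h w
        refine ⟨c, funext fun i => ?_⟩
        rw [E_mulVec, congrFun hc (Equiv.swap 1 2 i)]
        simp only [Pi.smul_apply, smul_eq_mul, segreV_swap]
    rw [hkillE, hpt]
  constructor
  · rw [hTE, ← LinearEquiv.coe_coe E, Submodule.span_image, LinearEquiv.finrank_map_eq]
    exact hr1
  · rw [hTE, he1, ← LinearEquiv.coe_coe E, ← Submodule.map_coe]
    rw [Submodule.map_span, LinearEquiv.coe_coe, Set.image_union, hS1, hS2]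

end TZaux

/-- The embedded tangent space to `Z₁` (resp. `Z₂`) at `φ = ρ(σ(p,q),k)` has
dimension 9 and is spanned by the matrices with image in the a-line cone `A_p`
(resp. `B_q`) together with the matrices killing the hyperplane `k^∨` whose image
is a point of the other ruling line. -/
theorem tangent_space_Z [IsAlgClosed K] [CharZero K]
    (p q : Fin 2 → K) (k : Fin 4 → K) (hp : p ≠ 0) (hq : q ≠ 0) (hk : k ≠ 0) :
    (Module.finrank K ↥(Submodule.span K
        {χ : Matrix (Fin 4) (Fin 4) K |
          ∃ (t : Matrix (Fin 2) (Fin 4) K) (s : Fin 2 → K),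
            χ = segre1 p t + segre1 s (rho' q k)}) = 9 ∧
      {χ : Matrix (Fin 4) (Fin 4) K |
          ∃ (t : Matrix (Fin 2) (Fin 4) K) (s : Fin 2 → K),
            χ = segre1 p t + segre1 s (rho' q k)}
        = ↑(Submodule.span K
            ({ψ : Matrix (Fin 4) (Fin 4) K | ∀ w : Fin 4 → K, memA p (ψ.mulVec w)} ∪
             {ψ : Matrix (Fin 4) (Fin 4) K |
               (∀ x : Fin 4 → K, ∑ i, k i * x i = 0 → ψ.mulVec x = 0) ∧
               ∃ r : Fin 2 → K, ∀ w : Fin 4 → K, ∃ c : K,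
                 ψ.mulVec w = c • segreV r q}))) ∧
    (Module.finrank K ↥(Submodule.span K
        {χ : Matrix (Fin 4) (Fin 4) K |
          ∃ (t : Matrix (Fin 2) (Fin 4) K) (s : Fin 2 → K),
            χ = segre2 q t + segre2 s (rho' p k)}) = 9 ∧
      {χ : Matrix (Fin 4) (Fin 4) K |
          ∃ (t : Matrix (Fin 2) (Fin 4) K) (s : Fin 2 → K),
            χ = segre2 q t + segre2 s (rho' p k)}
        = ↑(Submodule.span K
            ({ψ : Matrix (Fin 4) (Fin 4) K | ∀ w : Fin 4 → K, memB q (ψ.mulVec w)} ∪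
             {ψ : Matrix (Fin 4) (Fin 4) K |
               (∀ x : Fin 4 → K, ∑ i, k i * x i = 0 → ψ.mulVec x = 0) ∧
               ∃ r : Fin 2 → K, ∀ w : Fin 4 → K, ∃ c : K,
                 ψ.mulVec w = c • segreV p r}))) := by
  exact ⟨TZaux.mainA p q k hp hq hk, TZaux.mainB p q k hp hq hk⟩
end

section
/- Let p, q ∈ K²\{0} and k ∈ K⁴\{0}, and set φ = ρ(σ(p,q), k). The subspace T_C = {ρ(u,k) + ρ(σ(p,q), k') : u ∈ A_p + B_q, k' ∈ K⁴} of M₄(K) — the (affine cone over the) tangent space to Z₁ ∩ Z₂ ≅ Q × ℙ³ at φ — equals {ψ ∈ M₄(K) : ψw ∈ A_p + B_q for all w ∈ K⁴, and ψx ∈ K·σ(p,q) whenever Σᵢ kᵢxᵢ = 0}. -/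
variable {K : Type*} [Field K]

lemma memA_smul (s : Fin 2 → K) (x : Fin 4 → K) (c : K) (h : memA s x) :
    memA s (c • x) := by
  obtain ⟨h1, h2⟩ := h
  constructor <;> simp only [Pi.smul_apply, smul_eq_mul] <;>
    [linear_combination c * h1; linear_combination c * h2]

lemma memA_add (s : Fin 2 → K) (x y : Fin 4 → K) (hx : memA s x) (hy : memA s y) :
    memA s (x + y) := by
  obtain ⟨h1, h2⟩ := hx; obtain ⟨h3, h4⟩ := hy
  constructor <;> simp only [Pi.add_apply, mul_add, h1, h2, h3, h4]

lemma memB_smul (s : Fin 2 → K) (x : Fin 4 → K) (c : K) (h : memB s x) :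
    memB s (c • x) := by
  obtain ⟨h1, h2⟩ := h
  constructor <;> simp only [Pi.smul_apply, smul_eq_mul] <;>
    [linear_combination c * h1; linear_combination c * h2]

lemma memA_segre (p q : Fin 2 → K) : memA p (segreV p q) := by
  constructor <;> simp [segreV] <;> ring

lemma memB_segre (p q : Fin 2 → K) : memB q (segreV p q) := by
  constructor <;> simp [segreV] <;> ring

lemma rho_mulVec (u k w : Fin 4 → K) :
    (rho u k).mulVec w = (∑ j, k j * w j) • u := by
  funext i
  simp [rho, Matrix.mulVec, dotProduct, Finset.mul_sum, Fin.sum_univ_four]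
  ring

/-- The tangent space to `Z₁ ∩ Z₂ ≅ Q × ℙ³` at `φ = ρ(σ(p,q),k)` is the set of
matrices with image in the plane cone `A_p + B_q` sending the hyperplane `k^∨`
into the line `K·σ(p,q)`. -/
theorem tangent_space_intersection [IsAlgClosed K] [CharZero K]
    (p q : Fin 2 → K) (k : Fin 4 → K) (hp : p ≠ 0) (hq : q ≠ 0) (hk : k ≠ 0) :
    {χ : Matrix (Fin 4) (Fin 4) K |
        ∃ (u : Fin 4 → K) (k' : Fin 4 → K),
          (∃ a b : Fin 4 → K, memA p a ∧ memB q b ∧ u = a + b) ∧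
          χ = rho u k + rho (segreV p q) k'}
      = {ψ : Matrix (Fin 4) (Fin 4) K |
          (∀ w : Fin 4 → K, ∃ a b : Fin 4 → K,
            memA p a ∧ memB q b ∧ ψ.mulVec w = a + b) ∧
          (∀ x : Fin 4 → K, ∑ i, k i * x i = 0 →
            ∃ c : K, ψ.mulVec x = c • segreV p q)} := by
  ext χ
  simp only [Set.mem_setOf_eq]
  constructor
  · rintro ⟨u, k', ⟨a, b, ha, hb, rfl⟩, rfl⟩
    constructor
    · intro w
      refine ⟨(∑ j, k j * w j) • a + (∑ j, k' j * w j) • segreV p q,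
        (∑ j, k j * w j) • b, ?_, ?_, ?_⟩
      · exact memA_add _ _ _ (memA_smul _ _ _ ha)
          (memA_smul _ _ _ (memA_segre p q))
      · exact memB_smul _ _ _ hb
      · simp only [Matrix.add_mulVec, rho_mulVec]
        module
    · intro x hx
      refine ⟨∑ j, k' j * x j, ?_⟩
      simp only [Matrix.add_mulVec, rho_mulVec, hx]
      module
  · rintro ⟨h1, h2⟩
    obtain ⟨j0, hj0⟩ := Function.ne_iff.mp hk
    simp only [Pi.zero_apply] at hj0
    set w0 : Fin 4 → K := (k j0)⁻¹ • (Pi.single j0 1 : Fin 4 → K) with hw0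
    have hsum0 : ∑ i, k i * w0 i = 1 := by
      rw [hw0]
      rw [Finset.sum_eq_single j0]
      · simp [Pi.single, hj0]
      · intro i _ hi; simp [Pi.single_eq_of_ne hi]
      · simp
    set u : Fin 4 → K := χ.mulVec w0 with hu
    have hcj : ∀ j : Fin 4, ∃ c : K,
        χ.mulVec (Pi.single j 1) - k j • u = c • segreV p q := by
      intro j
      have hz : ∑ i, k i * (Pi.single j 1 - k j • w0 : Fin 4 → K) i = 0 := by
        simp only [Pi.sub_apply, mul_sub, Finset.sum_sub_distrib]
        rw [Finset.sum_eq_single j]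
        · simp only [Pi.smul_apply, smul_eq_mul]
          have : ∑ i, k i * (k j * w0 i) = k j * ∑ i, k i * w0 i := by
            rw [Finset.mul_sum]; congr 1; funext i; ring
          rw [this, hsum0, Pi.single_eq_same]; ring
        · intro i _ hi; simp [Pi.single_eq_of_ne hi]
        · simp
      obtain ⟨c, hc⟩ := h2 _ hz
      refine ⟨c, ?_⟩
      rw [← hc, Matrix.mulVec_sub, Matrix.mulVec_smul, hu]
    choose k' hk' using hcj
    refine ⟨u, k', h1 w0, ?_⟩
    ext i j
    have := congrFun (hk' j) i
    have hcol : χ.mulVec (Pi.single j 1) i = χ i j := by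
      simp [Matrix.mulVec, dotProduct]
      rw [Finset.sum_eq_single j]
      · simp
      · intro b _ hb; simp [Pi.single_eq_of_ne hb]
      · simp
    simp only [Pi.sub_apply, Pi.smul_apply, smul_eq_mul, hcol] at this
    simp only [Matrix.add_apply, rho, Matrix.of_apply]
    linear_combination this
end

section
/- Let p, q ∈ K²\{0} and k ∈ K⁴\{0}. Define T₁ = {σ₁(p,t) + σ₁(s, ρ'(q,k)) : t ∈ M_{2×4}(K), s ∈ K²}, T₂ = {σ₂(q,t) + σ₂(s, ρ'(p,k)) : t ∈ M_{2×4}(K), s ∈ K²}, and T_C = {ρ(u,k) + ρ(σ(p,q), k') : u ∈ A_p + B_q, k' ∈ K⁴}, subspaces of M₄(K). Then T₁ ∩ T₂ = T_C; that is, at every point φ = ρ(σ(p,q),k) of Z₁ ∩ Z₂, the intersection of the tangent spaces to Z₁ and to Z₂ at φ equals the tangent space to Z₁ ∩ Z₂ at φ. -/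
variable {K : Type*} [Field K]

lemma two_ne_zero_cases {p : Fin 2 → K} (hp : p ≠ 0) : p 0 ≠ 0 ∨ p 1 ≠ 0 := by
  by_contra h
  push_neg at h
  exact hp (by ext i; fin_cases i <;> simp [h.1, h.2])

lemma extractA {p : Fin 2 → K} {a : Fin 4 → K} (hp : p ≠ 0) (ha : memA p a) :
    ∃ c : Fin 2 → K, a = segreV p c := by
  obtain ⟨h1, h2⟩ := ha
  rcases two_ne_zero_cases hp with h0 | h0
  · refine ⟨![a 0 / p 0, a 1 / p 0], ?_⟩
    ext i; fin_cases i <;> simp [segreV] <;> field_simp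
    · linear_combination -h1
    · linear_combination -h2
  · refine ⟨![a 2 / p 1, a 3 / p 1], ?_⟩
    ext i; fin_cases i <;> simp [segreV] <;> field_simp
    · linear_combination h1
    · linear_combination h2

lemma extractB {q : Fin 2 → K} {b : Fin 4 → K} (hq : q ≠ 0) (hb : memB q b) :
    ∃ d : Fin 2 → K, b = segreV d q := by
  obtain ⟨h1, h2⟩ := hb
  rcases two_ne_zero_cases hq with h0 | h0
  · refine ⟨![b 0 / q 0, b 2 / q 0], ?_⟩
    ext i; fin_cases i <;> simp [segreV] <;> field_simp
    · linear_combination -h1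
    · linear_combination -h2
  · refine ⟨![b 1 / q 1, b 3 / q 1], ?_⟩
    ext i; fin_cases i <;> simp [segreV] <;> field_simp
    · linear_combination h1
    · linear_combination h2

/-- At every point `ρ(σ(p,q),k)` of `Z₁ ∩ Z₂`, the intersection of the tangent
spaces to `Z₁` and to `Z₂` equals the tangent space to `Z₁ ∩ Z₂`. -/
theorem tangent_spaces_intersect_cleanly [IsAlgClosed K] [CharZero K]
    (p q : Fin 2 → K) (k : Fin 4 → K) (hp : p ≠ 0) (hq : q ≠ 0) (hk : k ≠ 0) :
    {χ : Matrix (Fin 4) (Fin 4) K |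
        ∃ (t : Matrix (Fin 2) (Fin 4) K) (s : Fin 2 → K),
          χ = segre1 p t + segre1 s (rho' q k)} ∩
      {χ : Matrix (Fin 4) (Fin 4) K |
        ∃ (t : Matrix (Fin 2) (Fin 4) K) (s : Fin 2 → K),
          χ = segre2 q t + segre2 s (rho' p k)}
      = {χ : Matrix (Fin 4) (Fin 4) K |
          ∃ (u : Fin 4 → K) (k' : Fin 4 → K),
            (∃ a b : Fin 4 → K, memA p a ∧ memB q b ∧ u = a + b) ∧
            χ = rho u k + rho (segreV p q) k'} := by
  ext χ
  simp only [Set.mem_inter_iff, Set.mem_setOf_eq]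
  constructor
  · rintro ⟨⟨t, s, h1⟩, ⟨t', s', h2⟩⟩
    have E : ∀ r l, (segre1 p t + segre1 s (rho' q k)) r l
        = (segre2 q t' + segre2 s' (rho' p k)) r l := by
      intro r l; rw [← h1, ← h2]
    have E0 := fun l => E 0 l
    have E1 := fun l => E 1 l
    have E2 := fun l => E 2 l
    have E3 := fun l => E 3 l
    simp only [segre1, segre2, rho', Matrix.add_apply, Matrix.of_apply,
      Matrix.cons_val_zero, Matrix.cons_val_one, Matrix.head_cons,
      Matrix.cons_val_two, Matrix.tail_cons, Matrix.cons_val_three] at E0 E1 E2 E3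
    set μ : K := q 0 * s' 1 - q 1 * s' 0 with hμ
    have key : ∀ l, q 0 * t 1 l - q 1 * t 0 l = μ * k l := by
      rcases two_ne_zero_cases hp with h0 | h0
      · intro l
        refine mul_left_cancel₀ h0 ?_
        linear_combination q 0 * E1 l - q 1 * E0 l
      · intro l
        refine mul_left_cancel₀ h0 ?_
        linear_combination q 0 * E3 l - q 1 * E2 l
    have hzk : ∃ (z : Fin 2 → K) (k'' : Fin 4 → K),
        ∀ j l, t j l = z j * k l + q j * k'' l := by
      rcases two_ne_zero_cases hq with h0 | h0
      · refine ⟨![0, μ / q 0], fun l => t 0 l / q 0, ?_⟩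
        intro j l; fin_cases j <;> simp <;> field_simp
        linear_combination key l
      · refine ⟨![-μ / q 1, 0], fun l => t 1 l / q 1, ?_⟩
        intro j l; fin_cases j <;> simp <;> field_simp
        linear_combination (-1 : K) * key l
    obtain ⟨z, k'', ht⟩ := hzk
    refine ⟨segreV p z + segreV s q, k'',
      ⟨segreV p z, segreV s q, ⟨by simp [segreV]; ring, by simp [segreV]; ring⟩,
        ⟨by simp [segreV]; ring, by simp [segreV]; ring⟩, rfl⟩, ?_⟩
    rw [h1]
    ext r l
    fin_cases r <;>
      simp [segre1, rho, rho', segreV, Matrix.add_apply, Pi.add_apply]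
    · linear_combination p 0 * ht 0 l
    · linear_combination p 0 * ht 1 l
    · linear_combination p 1 * ht 0 l
    · linear_combination p 1 * ht 1 l
  · rintro ⟨u, k', ⟨a, b, ha, hb, hu⟩, hχ⟩
    obtain ⟨c, rfl⟩ := extractA hp ha
    obtain ⟨d, rfl⟩ := extractB hq hb
    subst hu
    subst hχ
    constructor
    · refine ⟨rho' c k + rho' q k', d, ?_⟩
      ext r l
      fin_cases r <;>
        simp [segre1, rho, rho', segreV, Matrix.add_apply, Pi.add_apply] <;> ring
    · refine ⟨rho' d k + rho' p k', c, ?_⟩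
      ext r l
      fin_cases r <;>
        simp [segre2, rho, rho', segreV, Matrix.add_apply, Pi.add_apply] <;> ring
end
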